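/- arXiv:1812.09130 — 3 statements merged into one kernel-verified Lean document; each statement's English description precedes it below -/
import Mathlib

section
/- The cyclic algebra (L|K, σ, a) is isomorphic as a K-algebra to the matrix algebra M_n(K) if and only if a is a norm of the extension L/K, i.e., a ∈ N_{L/K}(L×). -/
/-- A presentation of the `K`-algebra `A` as the cyclic algebra `(L|K, σ, a)`:
`A = ⊕_{i=0}^{n-1} L·uⁱ` with `uⁿ = a·1` and `u⁻¹lu = σ(l)` for `l ∈ L`,
where `n = [L : K]`. -/
structure CyclicAlgebraPresentation (K L : Type*) [Field K] [Field L] [Algebra K L]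
    (σ : L ≃ₐ[K] L) (a : K) (A : Type*) [Ring A] [Algebra K A] where
  /-- the embedding of `L` into `A` -/
  ι : L →ₐ[K] A
  /-- the distinguished element `u` -/
  u : A
  /-- a two-sided inverse of `u` -/
  uInv : A
  u_mul_uInv : u * uInv = 1
  uInv_mul_u : uInv * u = 1
  u_pow : u ^ (Module.finrank K L) = algebraMap K A a
  conj : ∀ l : L, uInv * ι l * u = ι (σ l)
  directSum : ∀ x : A, ∃! c : Fin (Module.finrank K L) → L,
    x = ∑ i, ι (c i) * u ^ (i : ℕ)

section PAux
variable {K L : Type*} [Field K] [Field L] [Algebra K L]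
  {σ : L ≃ₐ[K] L} {a : K} {A : Type*} [Ring A] [Algebra K A]
  (P : CyclicAlgebraPresentation K L σ a A)

lemma aux_comm (c : L) : P.u * P.ι c = P.ι (σ⁻¹ c) * P.u := by
  have h := P.conj (σ⁻¹ c)
  have hc : σ (σ⁻¹ c) = c := σ.apply_symm_apply c
  rw [hc] at h
  calc P.u * P.ι c = P.u * (P.uInv * P.ι (σ⁻¹ c) * P.u) := by rw [h]
    _ = (P.u * P.uInv) * (P.ι (σ⁻¹ c) * P.u) := by
        simp only [mul_assoc]
    _ = P.ι (σ⁻¹ c) * P.u := by rw [P.u_mul_uInv, one_mul]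

lemma aux_pow_comm (i : ℕ) (c : L) :
    P.u ^ i * P.ι c = P.ι ((σ⁻¹ ^ i) c) * P.u ^ i := by
  induction i with
  | zero => simp
  | succ i ih =>
    rw [pow_succ', mul_assoc, ih, ← mul_assoc, aux_comm, pow_succ',
      AlgEquiv.mul_apply, mul_assoc]
end PAux

section Aux
variable {K L : Type*} [Field K] [Field L] [Algebra K L] [IsGalois K L] [FiniteDimensional K L]
  (σ : L ≃ₐ[K] L)

lemma aux_orderOf (hσ : ∀ τ : L ≃ₐ[K] L, ∃ i : ℕ, τ = σ ^ i) :
    orderOf σ = Module.finrank K L := by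
  rw [orderOf_eq_card_of_forall_mem_zpowers (fun τ => by
    obtain ⟨i, hi⟩ := hσ τ; exact ⟨i, by simp [hi]⟩), Nat.card_eq_fintype_card]
  exact Nat.card_eq_fintype_card.symm.trans (IsGalois.card_aut_eq_finrank K L)

lemma aux_prod (hσ : ∀ τ : L ≃ₐ[K] L, ∃ i : ℕ, τ = σ ^ i) (x : L) :
    ∏ i ∈ Finset.range (Module.finrank K L), (σ⁻¹ ^ i) x
      = algebraMap K L (Algebra.norm K x) := by
  have hord : orderOf σ⁻¹ = Module.finrank K L := by
    rw [orderOf_inv]; exact aux_orderOf σ hσ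
  have hcard : Fintype.card (L ≃ₐ[K] L) = Module.finrank K L :=
    Nat.card_eq_fintype_card.symm.trans (IsGalois.card_aut_eq_finrank K L)
  have hinj : Set.InjOn (fun i : ℕ => σ⁻¹ ^ i) (Finset.range (Module.finrank K L)) := by
    intro i hi j hj h
    exact pow_injOn_Iio_orderOf (x := σ⁻¹) (by simpa [hord] using Finset.mem_range.mp hi)
      (by simpa [hord] using Finset.mem_range.mp hj) h
  classical
  have himg : (Finset.range (Module.finrank K L)).image (fun i : ℕ => σ⁻¹ ^ i)
      = Finset.univ := by
    apply Finset.eq_univ_of_card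
    rw [Finset.card_image_of_injOn hinj, Finset.card_range, hcard]
  rw [Algebra.norm_eq_prod_automorphisms, ← himg, Finset.prod_image (fun i hi j hj h => hinj hi hj h)]

end Aux

section Forward
variable {K L : Type*} [Field K] [Field L] [Algebra K L] [IsGalois K L] [FiniteDimensional K L]
  (σ : L ≃ₐ[K] L) (a : K)
  {A : Type*} [Ring A] [Algebra K A]

set_option maxHeartbeats 1000000 in
lemma aux_forward (hσ : ∀ τ : L ≃ₐ[K] L, ∃ i : ℕ, τ = σ ^ i)
    (P : CyclicAlgebraPresentation K L σ a A)
    (e : A ≃ₐ[K] Matrix (Fin (Module.finrank K L)) (Fin (Module.finrank K L)) K) :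
    ∃ l : L, l ≠ 0 ∧ Algebra.norm K l = a := by
  classical
  have hdpos : 0 < Module.finrank K L := Module.finrank_pos
  haveI : Nonempty (Fin (Module.finrank K L)) := ⟨⟨0, hdpos⟩⟩
  let V : Type _ := (Fin (Module.finrank K L) → K)
  let g : A →ₐ[K] Module.End K V :=
    (algEquivMatrix' (R := K) (n := Fin (Module.finrank K L))).symm.toAlgHom.comp e.toAlgHom
  let ρ : L →ₐ[K] Module.End K V := g.comp P.ι
  have hρ : ∀ c : L, ρ c = g (P.ι c) := fun _ => rfl
  letI : Module L V := Module.compHom V ρ.toRingHom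
  have hsmul : ∀ (c : L) (v : V), c • v = ρ c v := fun _ _ => rfl
  haveI : IsScalarTower K L V := by
    constructor
    intro k c v
    rw [hsmul, hsmul, map_smul, LinearMap.smul_apply]
  haveI : FiniteDimensional L V := FiniteDimensional.right K L V
  have hrank : Module.finrank L V = 1 := by
    have h1 : Module.finrank K L * Module.finrank L V = Module.finrank K V :=
      Module.finrank_mul_finrank K L V
    have h2 : Module.finrank K V = Module.finrank K L := by
      show Module.finrank K (Fin (Module.finrank K L) → K) = Module.finrank K L
      simp [Module.finrank_pi]
    rw [h2] at h1
    have := hdpos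
    nlinarith [Module.finrank_pos (R := L) (M := V)]
  let v : V := fun _ => 1
  have hv : v ≠ 0 :=
    fun h => one_ne_zero (α := K) (show (1 : K) = 0 from congrFun h ⟨0, hdpos⟩)
  have hspan : Submodule.span L {v} = ⊤ := by
    apply Submodule.eq_top_of_finrank_eq
    rw [finrank_span_singleton hv, hrank]
  obtain ⟨m, hm⟩ : ∃ m : L, g P.u v = m • v := by
    have : g P.u v ∈ Submodule.span L {v} := hspan ▸ Submodule.mem_top
    rcases Submodule.mem_span_singleton.mp this with ⟨m, hm⟩
    exact ⟨m, hm.symm⟩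
  have key : ∀ k : ℕ, (g P.u ^ k) v = (∏ i ∈ Finset.range k, (σ⁻¹ ^ i) m) • v := by
    intro k
    induction k with
    | zero => simp
    | succ k ih =>
      rw [pow_succ', Module.End.mul_apply, ih, hsmul, ← Module.End.mul_apply (g P.u),
        hρ, ← map_mul, aux_comm, map_mul, Module.End.mul_apply, ← hρ, hm,
        ← hsmul, smul_smul]
      congr 1
      rw [Finset.prod_range_succ', pow_zero, AlgEquiv.one_apply, map_prod]
      refine congrArg (· * m) (Finset.prod_congr rfl fun i _ => ?_)
      rw [pow_succ', AlgEquiv.mul_apply]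
  have hm0 : m ≠ 0 := by
    intro h0
    have h1 : g P.uInv (g P.u v) = v := by
      rw [← Module.End.mul_apply, ← map_mul, P.uInv_mul_u, map_one, Module.End.one_apply]
    rw [hm, h0, zero_smul, map_zero] at h1
    exact hv h1.symm
  have hfin : (algebraMap K L a) • v
      = (∏ i ∈ Finset.range (Module.finrank K L), (σ⁻¹ ^ i) m) • v := by
    have h1 := key (Module.finrank K L)
    rw [← map_pow, P.u_pow] at h1
    have h2 : g (algebraMap K A a) = algebraMap K (Module.End K V) a := g.commutes a
    rw [h2, Module.algebraMap_end_apply] at h1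
    rw [algebraMap_smul, h1]
  have heq : algebraMap K L a
      = ∏ i ∈ Finset.range (Module.finrank K L), (σ⁻¹ ^ i) m := by
    have h0 : (algebraMap K L a
        - ∏ i ∈ Finset.range (Module.finrank K L), (σ⁻¹ ^ i) m) • v = 0 := by
      rw [sub_smul, hfin, sub_self]
    rcases smul_eq_zero.mp h0 with h | h
    · exact sub_eq_zero.mp h
    · exact absurd h hv
  refine ⟨m, hm0, ?_⟩
  apply (algebraMap K L).injective
  rw [← aux_prod σ hσ m, ← heq]
end Forward

section Backward
variable {K L : Type*} [Field K] [Field L] [Algebra K L] [IsGalois K L] [FiniteDimensional K L]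
  (σ : L ≃ₐ[K] L) (a : K)
  {A : Type*} [Ring A] [Algebra K A]

set_option maxHeartbeats 2000000 in
lemma aux_backward (hσ : ∀ τ : L ≃ₐ[K] L, ∃ i : ℕ, τ = σ ^ i)
    (P : CyclicAlgebraPresentation K L σ a A)
    (l : L) (hl : l ≠ 0) (hal : Algebra.norm K l = a) :
    Nonempty (A ≃ₐ[K] Matrix (Fin (Module.finrank K L)) (Fin (Module.finrank K L)) K) := by
  classical
  have hdpos : 0 < Module.finrank K L := Module.finrank_pos
  have hordinv : orderOf σ⁻¹ = Module.finrank K L := by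
    rw [orderOf_inv]; exact aux_orderOf σ hσ
  -- the products π i
  set π : ℕ → L := fun i => ∏ j ∈ Finset.range i, (σ⁻¹ ^ j) l with hπdef
  have hπ0 : ∀ i, π i ≠ 0 := by
    intro i
    rw [hπdef]
    apply Finset.prod_ne_zero_iff.mpr
    intro j _ h
    exact hl ((σ⁻¹ ^ j).injective (by rw [h, map_zero]))
  -- the twisted multiplication operator
  have hlmul : ∀ (c x : L), Algebra.lmul K L c x = c * x := fun _ _ => rfl
  set T : Module.End K L := Algebra.lmul K L l * (σ⁻¹ : L ≃ₐ[K] L).toLinearMap with hTdef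
  have hT : ∀ (i : ℕ) (x : L), (T ^ i) x = π i * (σ⁻¹ ^ i) x := by
    intro i
    induction i with
    | zero => intro x; simp [hπdef]
    | succ i ih =>
      intro x
      rw [pow_succ, Module.End.mul_apply]
      rw [hTdef, Module.End.mul_apply]
      show (T ^ i) (l * σ⁻¹ x) = _
      rw [ih]
      rw [hπdef]
      simp only [Finset.prod_range_succ]
      rw [map_mul]
      have : (σ⁻¹ ^ i) (σ⁻¹ x) = (σ⁻¹ ^ (i + 1)) x := by
        rw [pow_succ, AlgEquiv.mul_apply]
      rw [this]
      ring
  have hTn : T ^ (Module.finrank K L) = Algebra.lmul K L (algebraMap K L a) := by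
    apply LinearMap.ext
    intro x
    rw [hT]
    have h1 : σ⁻¹ ^ (Module.finrank K L) = 1 := by
      rw [← hordinv]; exact pow_orderOf_eq_one σ⁻¹
    have h2 : π (Module.finrank K L) = algebraMap K L a := by
      show ∏ j ∈ Finset.range (Module.finrank K L), (σ⁻¹ ^ j) l = algebraMap K L a
      rw [aux_prod σ hσ l, hal]
    rw [h1, h2, AlgEquiv.one_apply]
    exact (hlmul _ _).symm
  -- the coefficient linear equivalence
  let ecoef : (Fin (Module.finrank K L) → L) →ₗ[K] A :=
    { toFun := fun c => ∑ i, P.ι (c i) * P.u ^ (i : ℕ)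
      map_add' := by
        intro c d
        simp only [Pi.add_apply, map_add, add_mul, Finset.sum_add_distrib]
      map_smul' := by
        intro k c
        simp only [Pi.smul_apply, map_smul, smul_mul_assoc, Finset.smul_sum, RingHom.id_apply] }
  have hecoef : ∀ c, ecoef c = ∑ i, P.ι (c i) * P.u ^ (i : ℕ) := fun _ => rfl
  have hbij : Function.Bijective ecoef := by
    constructor
    · intro c₁ c₂ h
      obtain ⟨c, _, huniq⟩ := P.directSum (ecoef c₁)
      have h1 : c₁ = c := huniq c₁ rfl
      have h2 : c₂ = c := huniq c₂ h
      rw [h1, h2]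
    · intro x
      obtain ⟨c, hc, -⟩ := P.directSum x
      exact ⟨c, hc.symm⟩
  let E : (Fin (Module.finrank K L) → L) ≃ₗ[K] A := LinearEquiv.ofBijective ecoef hbij
  haveI : FiniteDimensional K A := Module.Finite.equiv E
  -- the representation map
  let φL : (Fin (Module.finrank K L) → L) →ₗ[K] Module.End K L :=
    { toFun := fun c => ∑ i, Algebra.lmul K L (c i) * T ^ (i : ℕ)
      map_add' := by
        intro c d
        simp only [Pi.add_apply, map_add, add_mul, Finset.sum_add_distrib]
      map_smul' := by
        intro k c
        simp only [Pi.smul_apply, map_smul, smul_mul_assoc, Finset.smul_sum, RingHom.id_apply] }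
  let fL : A →ₗ[K] Module.End K L := φL ∘ₗ (E.symm : A →ₗ[K] (Fin (Module.finrank K L) → L))
  have hfE : ∀ c, fL (ecoef c) = ∑ i, Algebra.lmul K L (c i) * T ^ (i : ℕ) := by
    intro c
    show φL (E.symm (ecoef c)) = _
    have : ecoef c = E c := rfl
    rw [this, E.symm_apply_apply]
    rfl
  -- the key computation
  have hkey : ∀ (k : ℕ) (m : L), fL (P.ι m * P.u ^ k) = Algebra.lmul K L m * T ^ k := by
    intro k
    induction k using Nat.strong_induction_on with
    | _ k ih =>
      intro m
      by_cases hk : k < Module.finrank K L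
      · have hx : ecoef (Pi.single (⟨k, hk⟩ : Fin (Module.finrank K L)) m)
            = P.ι m * P.u ^ k := by
          rw [hecoef, Finset.sum_eq_single (⟨k, hk⟩ : Fin (Module.finrank K L))]
          · rw [Pi.single_eq_same]
          · intro b _ hb
            rw [Pi.single_eq_of_ne hb, map_zero, zero_mul]
          · intro h
            exact absurd (Finset.mem_univ _) h
        rw [← hx, hfE]
        rw [Finset.sum_eq_single (⟨k, hk⟩ : Fin (Module.finrank K L))]
        · rw [Pi.single_eq_same]
        · intro b _ hb
          rw [Pi.single_eq_of_ne hb, map_zero, zero_mul]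
        · intro h
          exact absurd (Finset.mem_univ _) h
      · push_neg at hk
        have hk' : k - Module.finrank K L < k := Nat.sub_lt (lt_of_lt_of_le hdpos hk) hdpos
        have hsplit : P.ι m * P.u ^ k
            = P.ι (m * algebraMap K L a) * P.u ^ (k - Module.finrank K L) := by
          calc P.ι m * P.u ^ k
              = P.ι m * (P.u ^ (Module.finrank K L) * P.u ^ (k - Module.finrank K L)) := by
                rw [← pow_add, Nat.add_sub_cancel' hk]
            _ = P.ι m * (algebraMap K A a * P.u ^ (k - Module.finrank K L)) := by
                rw [P.u_pow]
            _ = (P.ι m * algebraMap K A a) * P.u ^ (k - Module.finrank K L) := by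
                rw [mul_assoc]
            _ = P.ι (m * algebraMap K L a) * P.u ^ (k - Module.finrank K L) := by
                rw [map_mul, AlgHom.commutes]
        rw [hsplit, ih _ hk', map_mul, ← hTn, mul_assoc, ← pow_add,
          Nat.add_sub_cancel' hk]
  -- multiplicativity on basic elements
  have hcomm : ∀ (i : ℕ) (d : L),
      T ^ i * Algebra.lmul K L d = Algebra.lmul K L ((σ⁻¹ ^ i) d) * T ^ i := by
    intro i d
    apply LinearMap.ext
    intro x
    simp only [Module.End.mul_apply, hT, hlmul, map_mul]
    ring
  have hbasic : ∀ (c d : L) (i j : ℕ),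
      fL ((P.ι c * P.u ^ i) * (P.ι d * P.u ^ j))
        = fL (P.ι c * P.u ^ i) * fL (P.ι d * P.u ^ j) := by
    intro c d i j
    have h1 : (P.ι c * P.u ^ i) * (P.ι d * P.u ^ j)
        = P.ι (c * (σ⁻¹ ^ i) d) * P.u ^ (i + j) := by
      calc (P.ι c * P.u ^ i) * (P.ι d * P.u ^ j)
          = P.ι c * (P.u ^ i * P.ι d) * P.u ^ j := by
            rw [mul_assoc, mul_assoc, mul_assoc]
        _ = P.ι c * (P.ι ((σ⁻¹ ^ i) d) * P.u ^ i) * P.u ^ j := by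
            rw [aux_pow_comm]
        _ = P.ι (c * (σ⁻¹ ^ i) d) * P.u ^ (i + j) := by
            rw [map_mul, pow_add]
            simp only [mul_assoc]
    rw [h1, hkey, hkey, hkey, map_mul, pow_add]
    calc Algebra.lmul K L c * Algebra.lmul K L ((σ⁻¹ ^ i) d) * (T ^ i * T ^ j)
        = Algebra.lmul K L c * (Algebra.lmul K L ((σ⁻¹ ^ i) d) * T ^ i) * T ^ j := by
          simp only [mul_assoc]
      _ = Algebra.lmul K L c * (T ^ i * Algebra.lmul K L d) * T ^ j := by
          rw [hcomm]
      _ = Algebra.lmul K L c * T ^ i * (Algebra.lmul K L d * T ^ j) := by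
          simp only [mul_assoc]
  -- full multiplicativity
  have hmul : ∀ x y : A, fL (x * y) = fL x * fL y := by
    intro x y
    obtain ⟨c, hc, -⟩ := P.directSum x
    obtain ⟨d, hd, -⟩ := P.directSum y
    rw [hc, hd, Finset.sum_mul_sum]
    rw [map_sum, map_sum, map_sum, Finset.sum_mul_sum]
    apply Finset.sum_congr rfl
    intro i _
    rw [map_sum]
    apply Finset.sum_congr rfl
    intro j _
    exact hbasic (c i) (d j) i j
  have hone : fL 1 = 1 := by
    have h1 : (1 : A) = P.ι 1 * P.u ^ (0 : ℕ) := by simp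
    rw [h1, hkey, pow_zero, mul_one]
    apply LinearMap.ext
    intro x
    rw [hlmul, one_mul, Module.End.one_apply]
  have hcommutes : ∀ k : K, fL (algebraMap K A k) = algebraMap K (Module.End K L) k := by
    intro k
    have h1 : algebraMap K A k = P.ι (algebraMap K L k) * P.u ^ (0 : ℕ) := by
      simp [AlgHom.commutes]
    rw [h1, hkey, pow_zero, mul_one]
    apply LinearMap.ext
    intro x
    rw [Module.algebraMap_end_apply]
    show algebraMap K L k * x = k • x
    rw [Algebra.smul_def]
  let Φ : A →ₐ[K] Module.End K L :=
    { toFun := fL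
      map_one' := hone
      map_mul' := hmul
      map_zero' := map_zero fL
      map_add' := map_add fL
      commutes' := hcommutes }
  -- injectivity
  have hφinj : ∀ c : Fin (Module.finrank K L) → L,
      (∑ i, Algebra.lmul K L (c i) * T ^ (i : ℕ)) = 0 → c = 0 := by
    intro c hc
    have hg : Function.Injective
        (fun i : Fin (Module.finrank K L) => ((σ⁻¹ ^ (i : ℕ) : L ≃ₐ[K] L) : L →* L)) := by
      intro i j h
      apply Fin.ext
      refine pow_injOn_Iio_orderOf (x := σ⁻¹) ?_ ?_ ?_
      · simp [hordinv, i.isLt]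
      · simp [hordinv, j.isLt]
      · apply AlgEquiv.ext
        intro x
        exact DFunLike.congr_fun h x
    have li : LinearIndependent L
        (fun i : Fin (Module.finrank K L) => ((σ⁻¹ ^ (i : ℕ) : L ≃ₐ[K] L) : L → L)) :=
      (linearIndependent_monoidHom L L).comp _ hg
    have hzero : ∑ i : Fin (Module.finrank K L),
        (c i * π (i : ℕ)) • ((σ⁻¹ ^ (i : ℕ) : L ≃ₐ[K] L) : L → L) = 0 := by
      funext x
      have := LinearMap.congr_fun hc x
      rw [LinearMap.sum_apply] at this
      simp only [Module.End.mul_apply, hT] at this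
      simp only [Finset.sum_apply, Pi.smul_apply, Pi.zero_apply, smul_eq_mul]
      rw [LinearMap.zero_apply] at this
      rw [← this]
      apply Finset.sum_congr rfl
      intro i _
      show c i * π (i : ℕ) * (σ⁻¹ ^ (i : ℕ)) x = _
      simp [Algebra.lmul, mul_assoc]
    have := Fintype.linearIndependent_iff.mp li (fun i => c i * π (i : ℕ)) hzero
    funext i
    have hi := this i
    rcases mul_eq_zero.mp hi with h | h
    · exact h
    · exact absurd h (hπ0 _)
  have hinj : Function.Injective Φ := by
    intro x y hxy
    have h1 : fL (x - y) = 0 := by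
      have : fL x = fL y := hxy
      rw [map_sub, this, sub_self]
    have h2 : E.symm (x - y) = 0 := by
      apply hφinj
      have h3 : x - y = ecoef (E.symm (x - y)) := by
        show x - y = E (E.symm (x - y))
        rw [E.apply_symm_apply]
      rw [h3] at h1
      rw [hfE] at h1
      exact h1
    have := congrArg E h2
    rw [E.apply_symm_apply, map_zero] at this
    exact sub_eq_zero.mp this
  -- surjectivity by dimension count
  have hrk : Module.finrank K A = Module.finrank K (Module.End K L) := by
    rw [← E.finrank_eq]
    show Module.finrank K (Fin (Module.finrank K L) → L)
      = Module.finrank K (L →ₗ[K] L)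
    rw [Module.finrank_linearMap, Module.finrank_pi_fintype]
    simp [Finset.sum_const, mul_comm]
  have hsurj : Function.Surjective Φ :=
    (LinearMap.injective_iff_surjective_of_finrank_eq_finrank (f := Φ.toLinearMap) hrk).mp hinj
  exact ⟨(AlgEquiv.ofBijective Φ ⟨hinj, hsurj⟩).trans
    (algEquivMatrix (Module.finBasis K L))⟩
end Backward

/-- The cyclic algebra `(L|K, σ, a)` is isomorphic as a `K`-algebra to `M_n(K)` if and
only if `a` is a norm of the extension `L/K`. -/
theorem cyclicAlgebra_iso_matrix_iff_isNorm
    (K L : Type*) [Field K] [Field L] [Algebra K L] {n : ℕ}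
    [IsGalois K L] [FiniteDimensional K L]
    (hn : Module.finrank K L = n)
    (σ : L ≃ₐ[K] L) (hσ : ∀ τ : L ≃ₐ[K] L, ∃ i : ℕ, τ = σ ^ i)
    (a : K) (ha : a ≠ 0)
    (A : Type*) [Ring A] [Algebra K A]
    (P : CyclicAlgebraPresentation K L σ a A) :
    Nonempty (A ≃ₐ[K] Matrix (Fin n) (Fin n) K) ↔
      ∃ l : L, l ≠ 0 ∧ Algebra.norm K l = a := by
  subst hn
  constructor
  · rintro ⟨e⟩
    exact aux_forward σ a hσ P e
  · rintro ⟨l, hl, hal⟩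
    exact aux_backward σ a hσ P l hl hal
end

section
/- If a ∈ A is an element of a finite-dimensional central simple algebra of dimension n² over ℚ, then the minimal polynomial of a over ℚ has degree at most n. -/
open Module Polynomial Pointwise TensorProduct



section Nondeg
variable {B : Type*} [Ring B] [IsSimpleRing B]

private lemma csa_zero_of_left {e : B} (he : e ≠ 0) (x : B)
    (h : ∀ b : B, e * b * x = 0) : x = 0 := by
  let T : TwoSidedIdeal B := TwoSidedIdeal.mk' {z | ∀ b : B, e * b * z = 0}
    (by simp)
    (fun {z w} hz hw b => by simp [mul_add, hz b, hw b])
    (fun {z} hz b => by simp [hz b])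
    (fun {c z} hz b => by simpa [mul_assoc] using hz (b * c))
    (fun {z c} hz b => by rw [← mul_assoc, hz b, zero_mul])
  have hxT : x ∈ T := by simpa [T, TwoSidedIdeal.mem_mk'] using h
  rcases IsSimpleRing.simple.eq_bot_or_eq_top T with hT | hT
  · rw [hT] at hxT; simpa using hxT
  · exfalso
    have h1 : (1 : B) ∈ T := by rw [hT]; trivial
    have := (by simpa [T, TwoSidedIdeal.mem_mk'] using h1 : ∀ b : B, e * b * 1 = 0) 1
    simp at this
    exact he this

private lemma csa_zero_of_right {e : B} (he : e ≠ 0) (x : B)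
    (h : ∀ b : B, x * b * e = 0) : x = 0 := by
  let T : TwoSidedIdeal B := TwoSidedIdeal.mk' {z | ∀ b : B, z * b * e = 0}
    (by simp)
    (fun {z w} hz hw b => by simp [add_mul, hz b, hw b])
    (fun {z} hz b => by simp [hz b])
    (fun {c z} hz b => by rw [mul_assoc, mul_assoc]; rw [← mul_assoc z b e, hz b, mul_zero])
    (fun {z c} hz b => by simpa [mul_assoc] using hz (c * b))
  have hxT : x ∈ T := by simpa [T, TwoSidedIdeal.mem_mk'] using h
  rcases IsSimpleRing.simple.eq_bot_or_eq_top T with hT | hT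
  · rw [hT] at hxT; simpa using hxT
  · exfalso
    have h1 : (1 : B) ∈ T := by rw [hT]; trivial
    have := (by simpa [T, TwoSidedIdeal.mem_mk'] using h1 : ∀ b : B, 1 * b * e = 0) 1
    simp at this
    exact he this

end Nondeg

section Idem
variable {B : Type*} [Ring B] [IsSimpleRing B]

private lemma csa_exists_idempotent_atom (K : Type*) [Field K] [Algebra K B]
    [FiniteDimensional K B] :
    ∃ e : B, e ≠ 0 ∧ e * e = e ∧ IsAtom (Submodule.span B {e}) := by
  haveI : IsArtinian B B := isArtinian_of_tower K inferInstance
  haveI : IsAtomic (Submodule B B) := isAtomic_of_orderBot_wellFounded_lt wellFounded_lt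
  obtain ⟨M, hM⟩ : ∃ M : Submodule B B, IsAtom M := by
    rcases IsAtomic.eq_bot_or_exists_atom_le (⊤ : Submodule B B) with h | ⟨M, hM, -⟩
    · exfalso
      have : (1 : B) ∈ (⊥ : Submodule B B) := h ▸ Submodule.mem_top
      simpa using this
    · exact ⟨M, hM⟩
  -- there exist m₁ m₀ ∈ M with m₁ * m₀ ≠ 0
  have hMM : ∃ m₁ ∈ M, ∃ m₀ ∈ M, m₁ * m₀ ≠ 0 := by
    by_contra hc
    push_neg at hc
    obtain ⟨x, hxM, hx0⟩ := (Submodule.ne_bot_iff M).mp hM.1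
    have hT : TwoSidedIdeal.span (M : Set B) = ⊤ := by
      rcases IsSimpleRing.simple.eq_bot_or_eq_top (TwoSidedIdeal.span (M : Set B)) with h | h
      · exfalso
        have hx : x ∈ TwoSidedIdeal.span (M : Set B) := TwoSidedIdeal.subset_span hxM
        rw [h] at hx
        exact hx0 (by simpa using hx)
      · exact h
    have h1 : (1 : B) ∈ TwoSidedIdeal.span (M : Set B) := by rw [hT]; trivial
    rw [TwoSidedIdeal.mem_span_iff_mem_addSubgroup_closure] at h1
    have key : ∀ z ∈ AddSubgroup.closure (Set.univ * (M : Set B) * Set.univ),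
        ∀ m ∈ M, m * z = 0 := by
      intro z hz
      induction hz using AddSubgroup.closure_induction with
      | mem w hw =>
        obtain ⟨-, ⟨u, -, m', hm', rfl⟩, v, -, rfl⟩ := hw
        intro m hm
        have h1 : u * m' ∈ M := M.smul_mem u hm'
        have h2 : m * (u * m') = 0 := hc m hm (u * m') h1
        have h3 := congrArg (· * v) h2
        simpa [mul_assoc] using h3
      | zero => intro m hm; simp
      | add w₁ w₂ h₁ h₂ ih₁ ih₂ =>
        intro m hm
        rw [mul_add, ih₁ m hm, ih₂ m hm, add_zero]
      | neg w hw ih =>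
        intro m hm
        rw [mul_neg, ih m hm, neg_zero]
    have : ∀ m ∈ M, m = 0 := by
      intro m hm
      simpa using key 1 h1 m hm
    exact hx0 (this x hxM)
  obtain ⟨m₁, hm₁, m₀, hm₀, hne⟩ := hMM
  have hm₀0 : m₀ ≠ 0 := fun h => hne (by simp [h])
  set ψ := LinearMap.toSpanSingleton B B m₀ with hψ
  have hψ_apply : ∀ x : B, ψ x = x * m₀ := fun x => rfl
  have hmap_le : Submodule.map ψ M ≤ M := by
    rintro _ ⟨m, hm, rfl⟩
    rw [hψ_apply]
    exact M.smul_mem m hm₀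
  have hmap : Submodule.map ψ M = M := by
    rcases lt_or_eq_of_le hmap_le with h | h
    · exfalso
      have hb := hM.2 _ h
      have : ψ m₁ ∈ Submodule.map ψ M := ⟨m₁, hm₁, rfl⟩
      rw [hb, Submodule.mem_bot] at this
      exact hne (by rw [← hψ_apply]; exact this)
    · exact h
  obtain ⟨e, heM, he_eq⟩ : ∃ e ∈ M, e * m₀ = m₀ := by
    have : m₀ ∈ Submodule.map ψ M := by rw [hmap]; exact hm₀
    obtain ⟨e, heM, hee⟩ := this
    exact ⟨e, heM, by rw [← hψ_apply]; exact hee⟩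
  have he0 : e ≠ 0 := by
    intro h
    rw [h, zero_mul] at he_eq
    exact hm₀0 he_eq.symm
  have hL : M ⊓ LinearMap.ker ψ = ⊥ := by
    rcases lt_or_eq_of_le (inf_le_left : M ⊓ LinearMap.ker ψ ≤ M) with h | h
    · exact hM.2 _ h
    · exfalso
      have heL : e ∈ M ⊓ LinearMap.ker ψ := h.symm ▸ heM
      have : ψ e = 0 := heL.2
      rw [hψ_apply, he_eq] at this
      exact hm₀0 this
  have hidem : e * e = e := by
    have hmem : e * e - e ∈ M ⊓ LinearMap.ker ψ := Submodule.mem_inf.mpr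
      ⟨M.sub_mem (M.smul_mem e heM) heM, by
        rw [LinearMap.mem_ker, map_sub, hψ_apply, hψ_apply, mul_assoc, he_eq, he_eq, sub_self]⟩
    rw [hL, Submodule.mem_bot, sub_eq_zero] at hmem
    exact hmem
  have hspan : Submodule.span B {e} = M := by
    have hle : Submodule.span B {e} ≤ M := (Submodule.span_le).mpr (by simpa using heM)
    rcases lt_or_eq_of_le hle with h | h
    · exfalso
      have := hM.2 _ h
      have he' : e ∈ (⊥ : Submodule B B) := this ▸ Submodule.mem_span_singleton_self e
      exact he0 (by simpa using he')
    · exact h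
  exact ⟨e, he0, hidem, hspan ▸ hM⟩

end Idem



private lemma csa_minpoly_sq_le (K : Type*) [Field K] [IsAlgClosed K]
    {B : Type*} [Ring B] [Algebra K B] [FiniteDimensional K B] [IsSimpleRing B] (b : B) :
    (minpoly K b).natDegree ^ 2 ≤ finrank K B := by
  obtain ⟨e, he0, hee, hAtom⟩ := csa_exists_idempotent_atom (B := B) K
  set M : Submodule B B := Submodule.span B {e} with hMdef
  have hmemM : ∀ x : B, x ∈ M ↔ ∃ c : B, c * e = x := by
    intro x
    rw [hMdef, Submodule.mem_span_singleton]
    simp [smul_eq_mul]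
  have heM : e ∈ M := Submodule.mem_span_singleton_self e
  have hup : ∀ x : B, e * (e * x) = e * x := fun x => by rw [← mul_assoc, hee]
  -- eBe = K e
  have key : ∀ y : B, e * y * e = y → ∃ μ : K, y = μ • e := by
    intro y hy
    set V : Submodule K B := M.restrictScalars K with hVdef
    have heV : e ∈ V := heM
    haveI : Nontrivial ↥V := ⟨⟨⟨e, heV⟩, 0, fun h => he0 (congrArg Subtype.val h)⟩⟩
    have hstab : ∀ x ∈ V, x * y ∈ V := by
      intro x hx
      have hxM : x ∈ M := hx
      obtain ⟨c, rfl⟩ := (hmemM x).mp hxM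
      have : c * e * y = (c * (e * y)) * e := by
        conv_lhs => rw [← hy]
        simp only [mul_assoc, hup, hee]
      exact (Submodule.restrictScalars_mem K M _).mpr ((hmemM _).mpr ⟨c * (e * y), this.symm⟩)
    let T : Module.End K ↥V := (LinearMap.mulRight K y).restrict
      (fun x hx => by simpa using hstab x hx)
    obtain ⟨μ, hμ⟩ := Module.End.exists_eigenvalue T
    obtain ⟨v, hv⟩ := hμ.exists_hasEigenvector
    have hveq : (v : B) * y = μ • (v : B) := by
      have := hv.apply_eq_smul
      have h2 := congrArg Subtype.val this
      simpa [T, LinearMap.restrict_coe_apply] using h2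
    have hv0 : (v : B) ≠ 0 := fun h => hv.2 (Subtype.ext h)
    -- the eigenspace as a B-submodule
    let χ : B →ₗ[B] B := LinearMap.toSpanSingleton B B y - LinearMap.toSpanSingleton B B (μ • (1 : B))
    have hχ : ∀ x : B, χ x = x * y - μ • x := by
      intro x
      simp [χ, LinearMap.toSpanSingleton_apply, smul_eq_mul, mul_smul_comm]
    have hWne : M ⊓ LinearMap.ker χ ≠ ⊥ := by
      intro h
      have hvW : (v : B) ∈ M ⊓ LinearMap.ker χ := by
        refine Submodule.mem_inf.mpr ⟨v.2, ?_⟩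
        rw [LinearMap.mem_ker, hχ, hveq, sub_self]
      rw [h, Submodule.mem_bot] at hvW
      exact hv0 hvW
    have hW : M ⊓ LinearMap.ker χ = M := by
      rcases lt_or_eq_of_le (inf_le_left : M ⊓ LinearMap.ker χ ≤ M) with h | h
      · exact absurd (hAtom.2 _ h) hWne
      · exact h
    have heW : e ∈ M ⊓ LinearMap.ker χ := hW.symm ▸ heM
    have h3 : e * y = μ • e := by
      have := (Submodule.mem_inf.mp heW).2
      rw [LinearMap.mem_ker, hχ, sub_eq_zero] at this
      exact this
    refine ⟨μ, ?_⟩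
    rw [← hy, h3, smul_mul_assoc, hee]
  -- a linear functional with ξ e = 1
  obtain ⟨ξ, hξ⟩ : ∃ ξ : Module.Dual K B, ξ e = 1 := by
    have h : ¬ ∀ f : Module.Dual K B, f e = 0 := by
      rw [Module.forall_dual_apply_eq_zero_iff]
      exact he0
    push_neg at h
    obtain ⟨f, hf⟩ := h
    exact ⟨(f e)⁻¹ • f, by simp [inv_mul_cancel₀ hf]⟩
  set V : Submodule K B := M.restrictScalars K with hVdef
  set N : Submodule K B := LinearMap.range (LinearMap.mulLeft K e) with hNdef
  have hmemV : ∀ x : B, x ∈ V ↔ ∃ c : B, c * e = x := fun x => hmemM x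
  have hmemN : ∀ x : B, x ∈ N ↔ ∃ c : B, e * c = x := by
    intro x
    constructor
    · rintro ⟨c, rfl⟩; exact ⟨c, rfl⟩
    · rintro ⟨c, rfl⟩; exact ⟨c, rfl⟩
  have hNe : ∀ n ∈ N, e * n = n := by
    intro n hn
    obtain ⟨c, rfl⟩ := (hmemN n).mp hn
    exact hup c
  -- the pairing
  have pair_eq : ∀ n ∈ N, ∀ v ∈ V, n * v = ξ (n * v) • e := by
    intro n hn v hv
    obtain ⟨c, rfl⟩ := (hmemN n).mp hn
    obtain ⟨d, rfl⟩ := (hmemV v).mp hv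
    obtain ⟨μ, hμ⟩ := key ((e * c) * (d * e)) (by simp only [mul_assoc, hup, hee])
    rw [hμ]
    simp [hξ]
  -- the two injections
  let P : B →ₗ[K] B →ₗ[K] K := (LinearMap.mul K B).compr₂ ξ
  have hP : ∀ x y : B, P x y = ξ (x * y) := fun x y => rfl
  let Θ : ↥N →ₗ[K] Module.Dual K ↥V := P.domRestrict₁₂ N V
  have hΘ : ∀ (n : ↥N) (v : ↥V), Θ n v = ξ ((n : B) * (v : B)) := fun n v => rfl
  have hΘinj : Function.Injective Θ := by
    rw [injective_iff_map_eq_zero]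
    intro n hn
    have hzero : ∀ c : B, (n : B) * c * e = 0 := by
      intro c
      have hce : c * e ∈ V := (hmemV _).mpr ⟨c, rfl⟩
      have h1 : ξ ((n : B) * (c * e)) = 0 := by
        have := congrFun (congrArg DFunLike.coe hn) ⟨c * e, hce⟩
        simpa [hΘ] using this
      have h2 := pair_eq (n : B) n.2 (c * e) hce
      rw [h1, zero_smul] at h2
      rw [mul_assoc]
      exact h2
    exact Subtype.ext (csa_zero_of_right he0 (n : B) hzero)
  let Θ' : ↥V →ₗ[K] Module.Dual K ↥N := P.flip.domRestrict₁₂ V N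
  have hΘ' : ∀ (v : ↥V) (n : ↥N), Θ' v n = ξ ((n : B) * (v : B)) := fun v n => rfl
  have hΘ'inj : Function.Injective Θ' := by
    rw [injective_iff_map_eq_zero]
    intro v hv
    have hzero : ∀ c : B, e * c * (v : B) = 0 := by
      intro c
      have hce : e * c ∈ N := (hmemN _).mpr ⟨c, rfl⟩
      have h1 : ξ ((e * c) * (v : B)) = 0 := by
        have := congrFun (congrArg DFunLike.coe hv) ⟨e * c, hce⟩
        simpa [hΘ'] using this
      have h2 := pair_eq (e * c) hce (v : B) v.2
      rw [h1, zero_smul] at h2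
      exact h2
    exact Subtype.ext (csa_zero_of_left he0 (v : B) hzero)
  have hm'm : finrank K ↥N ≤ finrank K ↥V := by
    have := LinearMap.finrank_le_finrank_of_injective hΘinj
    rwa [Subspace.dual_finrank_eq] at this
  have hmm' : finrank K ↥V ≤ finrank K ↥N := by
    have := LinearMap.finrank_le_finrank_of_injective hΘ'inj
    rwa [Subspace.dual_finrank_eq] at this
  -- surjectivity of Θ
  have hΘsurj : Function.Surjective Θ := by
    have hrank : finrank K ↥N = finrank K (Module.Dual K ↥V) := by
      rw [Subspace.dual_finrank_eq]
      exact le_antisymm hm'm hmm'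
    exact (LinearMap.injective_iff_surjective_of_finrank_eq_finrank hrank).mp hΘinj
  -- linear independence of products
  let bm := finBasis K ↥V
  let bn := finBasis K ↥N
  have hind : LinearIndependent K
      (fun p : Fin (finrank K ↥V) × Fin (finrank K ↥N) => ((bm p.1 : B) * (bn p.2 : B))) := by
    rw [Fintype.linearIndependent_iff]
    intro c hc p₀
    obtain ⟨i₀, j₀⟩ := p₀
    obtain ⟨nstar, hnstar⟩ := hΘsurj (bm.coord i₀)
    have h0 : ∑ p : Fin (finrank K ↥V) × Fin (finrank K ↥N),
        (nstar : B) * (c p • ((bm p.1 : B) * (bn p.2 : B))) = 0 := by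
      rw [← Finset.mul_sum, hc, mul_zero]
    have hterm : ∀ p : Fin (finrank K ↥V) × Fin (finrank K ↥N),
        (nstar : B) * (c p • ((bm p.1 : B) * (bn p.2 : B)))
          = (c p * (if p.1 = i₀ then 1 else 0)) • (bn p.2 : B) := by
      intro p
      have h1 : (nstar : B) * (bm p.1 : B) = (if p.1 = i₀ then (1:K) else 0) • e := by
        have hpq := pair_eq (nstar : B) nstar.2 (bm p.1 : B) (bm p.1).2
        have h2 : ξ ((nstar : B) * (bm p.1 : B)) = (if p.1 = i₀ then (1:K) else 0) := by
          have h3 := congrFun (congrArg DFunLike.coe hnstar) (bm p.1)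
          rw [hΘ] at h3
          rw [h3, Basis.coord_apply, Basis.repr_self, Finsupp.single_apply]
        rw [h2] at hpq
        exact hpq
      calc (nstar : B) * (c p • ((bm p.1 : B) * (bn p.2 : B)))
          = c p • (((nstar : B) * (bm p.1 : B)) * (bn p.2 : B)) := by
            rw [mul_smul_comm, mul_assoc]
        _ = c p • ((if p.1 = i₀ then (1:K) else 0) • (e * (bn p.2 : B))) := by
            rw [h1, smul_mul_assoc]
        _ = c p • ((if p.1 = i₀ then (1:K) else 0) • (bn p.2 : B)) := by
            rw [hNe _ (bn p.2).2]
        _ = (c p * (if p.1 = i₀ then 1 else 0)) • (bn p.2 : B) := by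
            rw [smul_smul]
    rw [Finset.sum_congr rfl (fun p _ => hterm p)] at h0
    rw [Fintype.sum_prod_type_right] at h0
    have h0' : ∑ j, (c (i₀, j)) • ((bn j : B)) = 0 := by
      rw [← h0]
      refine Finset.sum_congr rfl fun j _ => ?_
      simp [mul_ite, mul_one, mul_zero, ite_smul, zero_smul]
    have hbn : LinearIndependent K (fun j => ((bn j : B))) := by
      have := bn.linearIndependent.map' N.subtype (Submodule.ker_subtype N)
      exact this
    exact Fintype.linearIndependent_iff.mp hbn _ h0' j₀
  have hcard : finrank K ↥V * finrank K ↥N ≤ finrank K B := by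
    have := hind.fintype_card_le_finrank
    simpa using this
  -- the representation of B on V
  have hstabV : ∀ z : B, ∀ x ∈ V, z * x ∈ V := by
    intro z x hx
    obtain ⟨c, rfl⟩ := (hmemV x).mp hx
    exact (hmemV _).mpr ⟨z * c, by rw [mul_assoc]⟩
  let π : B →ₐ[K] Module.End K ↥V :=
    { toFun := fun z => (LinearMap.mulLeft K z).restrict (fun x hx => hstabV z x hx)
      map_one' := by
        ext v
        simp [LinearMap.restrict_coe_apply]
      map_mul' := by
        intro z w
        ext v
        exact mul_assoc z w (v : B)
      map_zero' := by
        ext v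
        simp [LinearMap.restrict_coe_apply]
      map_add' := by
        intro z w
        ext v
        exact add_mul z w (v : B)
      commutes' := by
        intro μ
        ext v
        simp only [LinearMap.restrict_coe_apply, LinearMap.mulLeft_apply,
          Module.algebraMap_end_apply, Submodule.coe_smul]
        exact (Algebra.smul_def μ (v : B)).symm }
  have hπ : Function.Injective π := by
    intro z w h
    have h' : ∀ v : ↥V, z * (v : B) = w * (v : B) := by
      intro v
      have h1 : π z v = π w v := by rw [h]
      have h2 := congrArg Subtype.val h1
      exact h2
    have hzw : ∀ c : B, (z - w) * c * e = 0 := by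
      intro c
      have hce : c * e ∈ V := (hmemV _).mpr ⟨c, rfl⟩
      have h2 := h' ⟨c * e, hce⟩
      rw [sub_mul, sub_mul, mul_assoc z, mul_assoc w, h2, sub_self]
    exact sub_eq_zero.mp (csa_zero_of_right he0 (z - w) hzw)
  haveI : FiniteDimensional K ↥V := inferInstance
  have hmp : minpoly K b = minpoly K (π b) := (@minpoly.algHom_eq K B (Module.End K ↥V) _ _ _ _ _ π hπ b).symm
  have hd : (minpoly K b).natDegree ≤ finrank K ↥V := by
    rw [hmp]
    have hT1 : (minpoly K (π b)).degree ≤ (LinearMap.charpoly (π b)).degree :=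
      minpoly.degree_le_of_ne_zero K (π b) (LinearMap.charpoly_monic (π b)).ne_zero
        (LinearMap.aeval_self_charpoly (π b))
    have := Polynomial.natDegree_le_natDegree hT1
    rwa [LinearMap.charpoly_natDegree] at this
  calc (minpoly K b).natDegree ^ 2
      = (minpoly K b).natDegree * (minpoly K b).natDegree := sq (minpoly K b).natDegree
    _ ≤ finrank K ↥V * finrank K ↥N := Nat.mul_le_mul hd (hd.trans hmm')
    _ ≤ finrank K B := hcard

section BaseChange
variable (k K A : Type*) [Field k] [Field K] [Algebra k K] [Ring A] [Algebra k A]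

private noncomputable def cPhi : (K ⊗[k] A) ≃ₗ[k] ((Basis.ofVectorSpaceIndex k K) →₀ A) :=
  letI := Classical.decEq (Basis.ofVectorSpaceIndex k K)
  (TensorProduct.congr (Basis.ofVectorSpace k K).repr (LinearEquiv.refl k A)).trans
    (TensorProduct.finsuppScalarLeft k A (Basis.ofVectorSpaceIndex k K))

variable {k K A}

private lemma cPhi_tmul (c : K) (a : A) (j) :
    cPhi k K A (c ⊗ₜ[k] a) j = (Basis.ofVectorSpace k K).repr c j • a := by
  letI := Classical.decEq (Basis.ofVectorSpaceIndex k K)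
  simp [cPhi, TensorProduct.finsuppScalarLeft_apply_tmul_apply]

private lemma cPhi_conj (u v : A) (w : K ⊗[k] A) (j) :
    cPhi k K A (((1:K) ⊗ₜ[k] u) * w * ((1:K) ⊗ₜ[k] v)) j = u * (cPhi k K A w j) * v := by
  induction w using TensorProduct.induction_on with
  | zero => simp
  | tmul c a =>
    rw [Algebra.TensorProduct.tmul_mul_tmul, Algebra.TensorProduct.tmul_mul_tmul]
    rw [one_mul, mul_one]
    rw [cPhi_tmul, cPhi_tmul]
    rw [mul_smul_comm, smul_mul_assoc]
  | add x y hx hy =>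
    simp only [mul_add, add_mul, map_add, Finsupp.add_apply, hx, hy]

end BaseChange

section Simple
variable {k K A : Type*} [Field k] [Field K] [Algebra k K] [Ring A] [Algebra k A]

private lemma cPhi_nontrivial [Nontrivial A] : Nontrivial (K ⊗[k] A) := by
  obtain ⟨j, hj⟩ : ∃ j, (Basis.ofVectorSpace k K).repr 1 j ≠ 0 := by
    by_contra hc
    push_neg at hc
    have : (Basis.ofVectorSpace k K).repr 1 = 0 := Finsupp.ext fun j => hc j
    have h1 : (1 : K) = 0 := by
      have := congrArg (Basis.ofVectorSpace k K).repr.symm this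
      simpa using this
    exact one_ne_zero h1
  refine ⟨1, 0, fun h => ?_⟩
  have h2 : cPhi k K A 1 j = 0 := by rw [h, map_zero]; rfl
  rw [Algebra.TensorProduct.one_def, cPhi_tmul] at h2
  rw [← Algebra.algebraMap_eq_smul_one] at h2
  exact hj ((map_eq_zero_iff _ (algebraMap k A).injective).mp h2)

private lemma csa_baseChange_simple [Algebra.IsCentral k A] [IsSimpleRing A] :
    IsSimpleRing (K ⊗[k] A) := by
  classical
  haveI : Nontrivial (K ⊗[k] A) := cPhi_nontrivial
  haveI : Nontrivial (TwoSidedIdeal (K ⊗[k] A)) := ⟨⊥, ⊤, fun h => by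
    have h1 : (1 : K ⊗[k] A) ∈ (⊥ : TwoSidedIdeal (K ⊗[k] A)) := by rw [h]; trivial
    rw [TwoSidedIdeal.mem_bot] at h1
    exact one_ne_zero h1⟩
  set eK := Basis.ofVectorSpace k K
  refine ⟨⟨fun I => ?_⟩⟩
  by_cases hbot : I = ⊥
  · exact Or.inl hbot
  · refine Or.inr ?_
    obtain ⟨x, hxI, hx0⟩ : ∃ x, x ∈ I ∧ x ≠ 0 := by
      by_contra hc
      push_neg at hc
      exact hbot (SetLike.ext fun z => ⟨fun hz => by simpa using hc z hz, fun hz => by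
        simp only [TwoSidedIdeal.mem_bot] at hz
        rw [hz]; exact TwoSidedIdeal.zero_mem I⟩)
    have hex : ∃ r, ∃ y, y ∈ I ∧ y ≠ 0 ∧ ((cPhi k K A y).support.card = r) :=
      ⟨_, x, hxI, hx0, rfl⟩
    obtain ⟨y, hyI, hy0, hycard⟩ := Nat.find_spec hex
    set s := Nat.find hex with hs
    have hmin : ∀ z, z ∈ I → z ≠ 0 → s ≤ (cPhi k K A z).support.card :=
      fun z hz hz0 => Nat.find_min' hex ⟨z, hz, hz0, rfl⟩
    have hΦy : cPhi k K A y ≠ 0 := fun h => hy0 (by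
      have := congrArg (cPhi k K A).symm h
      simpa using this)
    obtain ⟨j₀, hj₀⟩ : ∃ j₀, j₀ ∈ (cPhi k K A y).support := by
      rcases Finset.eq_empty_or_nonempty (cPhi k K A y).support with h | h
      · exact absurd (Finsupp.support_eq_empty.mp h) hΦy
      · exact ⟨h.choose, h.choose_spec⟩
    have ha₀ : cPhi k K A y j₀ ≠ 0 := Finsupp.mem_support_iff.mp hj₀
    -- 1 is a finite combination of conjugates of a₀
    have h1A : (1:A) ∈ TwoSidedIdeal.span {cPhi k K A y j₀} := by
      rcases IsSimpleRing.simple.eq_bot_or_eq_top (TwoSidedIdeal.span {cPhi k K A y j₀}) with h | h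
      · exfalso
        have := TwoSidedIdeal.subset_span (s := {cPhi k K A y j₀}) rfl
        rw [h] at this
        exact ha₀ (by simpa using this)
      · rw [h]; trivial
    rw [TwoSidedIdeal.mem_span_iff_mem_addSubgroup_closure] at h1A
    have build : ∀ z ∈ AddSubgroup.closure (Set.univ * ({cPhi k K A y j₀} : Set A) * Set.univ),
        ∃ w, w ∈ I ∧ cPhi k K A w j₀ = z ∧
          ∀ j, j ∉ (cPhi k K A y).support → cPhi k K A w j = 0 := by
      intro z hz
      induction hz using AddSubgroup.closure_induction with
      | mem t ht =>
        obtain ⟨-, ⟨u, -, a, ha, rfl⟩, v, -, rfl⟩ := ht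
        obtain rfl : a = cPhi k K A y j₀ := ha
        refine ⟨((1:K) ⊗ₜ[k] u) * y * ((1:K) ⊗ₜ[k] v),
          TwoSidedIdeal.mul_mem_right _ _ _ (TwoSidedIdeal.mul_mem_left _ _ _ hyI),
          by rw [cPhi_conj], fun j hj => ?_⟩
        rw [cPhi_conj, Finsupp.notMem_support_iff.mp hj, mul_zero, zero_mul]
      | zero => exact ⟨0, TwoSidedIdeal.zero_mem I, by simp, fun j _ => by simp⟩
      | add t₁ t₂ h₁ h₂ ih₁ ih₂ =>
        obtain ⟨w₁, hw₁, hj₁, hs₁⟩ := ih₁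
        obtain ⟨w₂, hw₂, hj₂, hs₂⟩ := ih₂
        exact ⟨w₁ + w₂, TwoSidedIdeal.add_mem I hw₁ hw₂,
          by rw [map_add, Finsupp.add_apply, hj₁, hj₂],
          fun j hj => by rw [map_add, Finsupp.add_apply, hs₁ j hj, hs₂ j hj, add_zero]⟩
      | neg t ht ih =>
        obtain ⟨w, hw, hj, hsupp⟩ := ih
        exact ⟨-w, TwoSidedIdeal.neg_mem I hw,
          by rw [map_neg, Finsupp.neg_apply, hj],
          fun j hjs => by rw [map_neg, Finsupp.neg_apply, hsupp j hjs, neg_zero]⟩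
    obtain ⟨w, hwI, hwj₀, hwsupp⟩ := build 1 h1A
    have hw0 : w ≠ 0 := fun h => one_ne_zero (by rw [← hwj₀, h, map_zero]; rfl)
    have hsub : (cPhi k K A w).support ⊆ (cPhi k K A y).support :=
      Finsupp.support_subset_iff.mpr hwsupp
    have hsupp_eq : (cPhi k K A w).support = (cPhi k K A y).support :=
      Finset.eq_of_subset_of_card_le hsub (by rw [hycard]; exact hmin w hwI hw0)
    -- all coordinates of w are central
    have central : ∀ j (u : A), u * cPhi k K A w j = cPhi k K A w j * u := by
      intro j u
      set z := ((1:K) ⊗ₜ[k] u) * w * ((1:K) ⊗ₜ[k] (1:A))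
        - ((1:K) ⊗ₜ[k] (1:A)) * w * ((1:K) ⊗ₜ[k] u) with hzdef
      have hzI : z ∈ I := TwoSidedIdeal.sub_mem I
        (TwoSidedIdeal.mul_mem_right _ _ _ (TwoSidedIdeal.mul_mem_left _ _ _ hwI))
        (TwoSidedIdeal.mul_mem_right _ _ _ (TwoSidedIdeal.mul_mem_left _ _ _ hwI))
      have hzval : ∀ j', cPhi k K A z j' = u * cPhi k K A w j' - cPhi k K A w j' * u := by
        intro j'
        rw [hzdef, map_sub, Finsupp.sub_apply, cPhi_conj, cPhi_conj, mul_one, one_mul]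
      have hz0 : z = 0 := by
        by_contra hzne
        have h5 := hmin z hzI hzne
        have hsubz : (cPhi k K A z).support ⊆ (cPhi k K A y).support.erase j₀ := by
          intro j' hj'
          have hj'ne : cPhi k K A z j' ≠ 0 := Finsupp.mem_support_iff.mp hj'
          rw [Finset.mem_erase]
          constructor
          · intro hj'eq
            apply hj'ne
            rw [hj'eq, hzval, hwj₀, mul_one, one_mul, sub_self]
          · by_contra hj'mem
            apply hj'ne
            rw [hzval, hwsupp j' hj'mem, mul_zero, zero_mul, sub_self]
        have h6 : (cPhi k K A z).support.card ≤ (cPhi k K A y).support.card - 1 := by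
          have := Finset.card_le_card hsubz
          rwa [Finset.card_erase_of_mem hj₀] at this
        have h7 : 1 ≤ (cPhi k K A y).support.card := Finset.card_pos.mpr ⟨j₀, hj₀⟩
        rw [hycard] at h6 h7
        omega
      have h9 := hzval j
      rw [hz0] at h9
      simp only [map_zero, Finsupp.coe_zero, Pi.zero_apply] at h9
      exact sub_eq_zero.mp h9.symm
    -- all coordinates are scalars
    have hqex : ∀ j, ∃ q : k, algebraMap k A q = cPhi k K A w j := by
      intro j
      have hc : cPhi k K A w j ∈ Subalgebra.center k A :=
        Subalgebra.mem_center_iff.mpr (fun u => central j u)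
      rw [Algebra.IsCentral.center_eq_bot, Algebra.mem_bot] at hc
      obtain ⟨q, hq⟩ := hc
      exact ⟨q, hq⟩
    choose q hq using hqex
    -- reconstruct w as a pure tensor
    set c : K := ∑ j ∈ (cPhi k K A w).support, q j • eK j with hcdef
    have hw_eq : w = c ⊗ₜ[k] (1:A) := by
      apply (cPhi k K A).injective
      ext j'
      rw [hcdef, TensorProduct.sum_tmul, map_sum, Finsupp.finset_sum_apply]
      have hterm : ∀ j ∈ (cPhi k K A w).support,
          cPhi k K A ((q j • eK j) ⊗ₜ[k] (1:A)) j'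
            = (if j = j' then q j else 0) • (1:A) := by
        intro j _
        rw [cPhi_tmul, map_smul, Finsupp.smul_apply, Basis.repr_self, Finsupp.single_apply]
        by_cases h : j = j' <;> simp [h]
      rw [Finset.sum_congr rfl hterm]
      simp only [ite_smul, zero_smul]
      rw [Finset.sum_ite_eq' (cPhi k K A w).support j' (fun j => q j • (1:A))]
      by_cases hj' : j' ∈ (cPhi k K A w).support
      · rw [if_pos hj']
        rw [← hq j', Algebra.algebraMap_eq_smul_one]
      · rw [if_neg hj']
        have : cPhi k K A w j' = 0 := Finsupp.notMem_support_iff.mp hj'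
        rw [this]
    have hc0 : c ≠ 0 := by
      intro h
      apply hw0
      rw [hw_eq, h, TensorProduct.zero_tmul]
    have h1I : (1 : K ⊗[k] A) ∈ I := by
      have hmul : (c⁻¹ ⊗ₜ[k] (1:A)) * w ∈ I := TwoSidedIdeal.mul_mem_left _ _ _ hwI
      have : (c⁻¹ ⊗ₜ[k] (1:A)) * w = 1 := by
        rw [hw_eq, Algebra.TensorProduct.tmul_mul_tmul, inv_mul_cancel₀ hc0, mul_one,
          Algebra.TensorProduct.one_def]
      rwa [this] at hmul
    rw [eq_top_iff]
    intro z _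
    have := TwoSidedIdeal.mul_mem_left I z 1 h1I
    rwa [mul_one] at this

private lemma csa_minpoly_descent [Nontrivial A] (a : A)
    (hb : IsIntegral K ((1:K) ⊗ₜ[k] a)) :
    (minpoly k a).natDegree ≤ (minpoly K ((1:K) ⊗ₜ[k] a)).natDegree := by
  classical
  set eK := Basis.ofVectorSpace k K with heK
  set b : K ⊗[k] A := (1:K) ⊗ₜ[k] a with hbdef
  set q := minpoly K b with hqdef
  have hmonic : q.Monic := minpoly.monic hb
  set d := q.natDegree with hd
  have h0 : Polynomial.aeval b q = 0 := minpoly.aeval K b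
  have hΦ : ∀ j, ∑ i ∈ Finset.range (d+1), (eK.repr (q.coeff i) j) • a ^ i = 0 := by
    intro j
    have h1 : cPhi k K A (Polynomial.aeval b q) j = 0 := by rw [h0, map_zero]; rfl
    rw [Polynomial.aeval_eq_sum_range, map_sum, Finsupp.finset_sum_apply] at h1
    have h2 : ∀ i : ℕ, cPhi k K A (q.coeff i • b ^ i) j = (eK.repr (q.coeff i) j) • a ^ i := by
      intro i
      have h3 : q.coeff i • b ^ i = (q.coeff i) ⊗ₜ[k] (a ^ i) := by
        rw [hbdef, show ((1:K) ⊗ₜ[k] a) ^ i = (((1:K)^i) ⊗ₜ[k] (a^i) : K ⊗[k] A) from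
          Algebra.TensorProduct.tmul_pow 1 a i, one_pow]
        rw [TensorProduct.smul_tmul', smul_eq_mul, mul_one]
      rw [h3, cPhi_tmul]
    rw [Finset.sum_congr rfl (fun i _ => h2 i)] at h1
    exact h1
  obtain ⟨j, hj⟩ : ∃ j, eK.repr 1 j ≠ 0 := by
    by_contra hc
    push_neg at hc
    have h4 : eK.repr 1 = 0 := Finsupp.ext fun j => hc j
    have h5 : (1 : K) = 0 := by
      have := congrArg eK.repr.symm h4
      simpa using this
    exact one_ne_zero h5
  set h : Polynomial k := ∑ i ∈ Finset.range (d+1),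
    Polynomial.C (eK.repr (q.coeff i) j) * Polynomial.X ^ i with hhdef
  have hval : Polynomial.aeval a h = 0 := by
    have heq : Polynomial.aeval a h
        = ∑ i ∈ Finset.range (d+1), (eK.repr (q.coeff i) j) • a ^ i := by
      rw [hhdef, map_sum]
      refine Finset.sum_congr rfl fun i _ => ?_
      rw [map_mul, Polynomial.aeval_C, Polynomial.aeval_X_pow, ← Algebra.smul_def]
    rw [heq]
    exact hΦ j
  have hcoeff : h.coeff d = eK.repr 1 j := by
    have heq : h.coeff d = ∑ i ∈ Finset.range (d+1),
        eK.repr (q.coeff i) j * (if d = i then 1 else 0) := by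
      rw [hhdef, Polynomial.finset_sum_coeff]
      refine Finset.sum_congr rfl fun i _ => ?_
      rw [Polynomial.coeff_C_mul, Polynomial.coeff_X_pow]
    rw [heq]
    simp only [mul_ite, mul_one, mul_zero]
    rw [Finset.sum_ite_eq (Finset.range (d+1)) d (fun i => eK.repr (q.coeff i) j)]
    rw [if_pos (Finset.self_mem_range_succ d)]
    rw [hd, hmonic.coeff_natDegree]
  have hne : h ≠ 0 := by
    intro hzero
    rw [hzero, Polynomial.coeff_zero] at hcoeff
    exact hj hcoeff.symm
  have hdeg : h.natDegree ≤ d := by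
    refine Polynomial.natDegree_sum_le_of_forall_le _ _ (fun i hi => ?_)
    refine le_trans (Polynomial.natDegree_mul_le) ?_
    simp only [Polynomial.natDegree_C, Polynomial.natDegree_X_pow, zero_add]
    exact Nat.lt_succ_iff.mp (Finset.mem_range.mp hi)
  have hmin := minpoly.degree_le_of_ne_zero k a hne hval
  exact le_trans (Polynomial.natDegree_le_natDegree hmin) hdeg

end Simple

/-- If `a` is an element of a finite-dimensional central simple algebra of dimension `n²`
over `ℚ`, then the minimal polynomial of `a` over `ℚ` has degree at most `n`. -/
theorem minpoly_natDegree_le_of_centralSimple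
    (A : Type*) [Ring A] [Algebra ℚ A] [FiniteDimensional ℚ A]
    [Algebra.IsCentral ℚ A] [IsSimpleRing A] (n : ℕ)
    (hdim : Module.finrank ℚ A = n ^ 2) (a : A) :
    (minpoly ℚ a).natDegree ≤ n := by
  classical
  set K := AlgebraicClosure ℚ with hK
  haveI : IsSimpleRing (K ⊗[ℚ] A) := csa_baseChange_simple
  haveI : Module.Finite K (K ⊗[ℚ] A) := inferInstance
  set b : K ⊗[ℚ] A := (1:K) ⊗ₜ[ℚ] a with hb
  have hbint : IsIntegral K b := IsIntegral.of_finite K b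
  have h1 := csa_minpoly_descent (K := K) a hbint
  have h2 := csa_minpoly_sq_le K b
  rw [Module.finrank_baseChange, hdim] at h2
  have h3 : (minpoly K b).natDegree ≤ n :=
    (Nat.pow_le_pow_iff_left (by norm_num : (2:ℕ) ≠ 0)).mp h2
  exact h1.trans h3
end

section
/- Let D₁ and D₂ be finite-dimensional central division algebras over a field K of coprime degrees d₁ and d₂ (so dim_K D_i = d_i²). Then D₁ ⊗_K D₂ is a central division algebra over K of degree d₁·d₂. -/
open scoped TensorProduct
open Module

set_option linter.unusedSectionVars false

section Aux
variable (K B C : Type*) [Field K]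
    [DivisionRing B] [Algebra K B] [FiniteDimensional K B]
    [DivisionRing C] [Algebra K C] [FiniteDimensional K C]

lemma aux_smul_eq (b : B) (u : B ⊗[K] C) : b • u = (b ⊗ₜ[K] 1) * u := by
  induction u using TensorProduct.induction_on with
  | zero => simp
  | tmul a c => simp [TensorProduct.smul_tmul', Algebra.TensorProduct.tmul_mul_tmul]
  | add u v hu hv => simp [mul_add, hu, hv]

/-- the left ideal generated by `x`, as a `B`-submodule -/
noncomputable def leftIdeal (x : B ⊗[K] C) : Submodule B (B ⊗[K] C) where
  carrier := Set.range (· * x)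
  add_mem' := by rintro _ _ ⟨a, rfl⟩ ⟨b, rfl⟩; exact ⟨a + b, (add_mul a b x)⟩
  zero_mem' := ⟨0, zero_mul x⟩
  smul_mem' := by
    rintro b _ ⟨a, rfl⟩
    refine ⟨(b ⊗ₜ[K] 1) * a, ?_⟩
    show ((b ⊗ₜ[K] 1) * a) * x = b • (a * x)
    rw [aux_smul_eq, mul_assoc]

lemma aux_dvd (x : B ⊗[K] C) :
    finrank K B ∣ finrank K (LinearMap.range (LinearMap.mulRight K x)) := by
  have hset : (LinearMap.range (LinearMap.mulRight K x) : Submodule K (B ⊗[K] C))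
      = (leftIdeal K B C x).restrictScalars K := by
    ext u
    simp only [LinearMap.mem_range, Submodule.restrictScalars_mem]
    rfl
  rw [hset]
  have : finrank K ((leftIdeal K B C x).restrictScalars K)
      = finrank K B * finrank B (leftIdeal K B C x) :=
    (Module.finrank_mul_finrank K B (leftIdeal K B C x)).symm
  exact ⟨_, this⟩

end Aux

section Center
variable (K D₁ D₂ : Type*) [Field K]
    [DivisionRing D₁] [Algebra K D₁] [FiniteDimensional K D₁] [Algebra.IsCentral K D₁]
    [DivisionRing D₂] [Algebra K D₂] [FiniteDimensional K D₂] [Algebra.IsCentral K D₂]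

noncomputable def myE : D₁ ⊗[K] D₂ ≃ₗ[K] (Basis.ofVectorSpaceIndex K D₂ →₀ D₁) :=
  letI := Classical.decEq (Basis.ofVectorSpaceIndex K D₂)
  (LinearEquiv.lTensor D₁ (Basis.ofVectorSpace K D₂).repr).trans
    (TensorProduct.finsuppScalarRight K K D₁ _)

lemma myE_tmul (a : D₁) (m : D₂) (i) :
    myE K D₁ D₂ (a ⊗ₜ[K] m) i = ((Basis.ofVectorSpace K D₂).repr m i) • a := by
  simp [myE]

lemma myE_symm_single (i) (a : D₁) :
    (myE K D₁ D₂).symm (Finsupp.single i a) = a ⊗ₜ[K] (Basis.ofVectorSpace K D₂) i := by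
  simp [myE]

lemma myE_mul_left (d : D₁) (u : D₁ ⊗[K] D₂) (i) :
    myE K D₁ D₂ ((d ⊗ₜ[K] 1) * u) i = d * myE K D₁ D₂ u i := by
  induction u using TensorProduct.induction_on with
  | zero => simp
  | tmul a m =>
      simp [myE_tmul, Algebra.TensorProduct.tmul_mul_tmul, mul_smul_comm]
  | add u v hu hv => simp [mul_add, hu, hv]

lemma myE_mul_right (d : D₁) (u : D₁ ⊗[K] D₂) (i) :
    myE K D₁ D₂ (u * (d ⊗ₜ[K] 1)) i = myE K D₁ D₂ u i * d := by
  induction u using TensorProduct.induction_on with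
  | zero => simp
  | tmul a m =>
      simp [myE_tmul, Algebra.TensorProduct.tmul_mul_tmul, smul_mul_assoc]
  | add u v hu hv => simp [add_mul, hu, hv]

lemma central_tensor : Algebra.IsCentral K (D₁ ⊗[K] D₂) := by
  constructor
  intro z hz
  rw [Subalgebra.mem_center_iff] at hz
  set b := Basis.ofVectorSpace K D₂ with hb
  have hcoef : ∀ i, ∃ c : K, myE K D₁ D₂ z i = algebraMap K D₁ c := by
    intro i
    have hcen : myE K D₁ D₂ z i ∈ Subalgebra.center K D₁ := by
      rw [Subalgebra.mem_center_iff]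
      intro d
      have := congrArg (fun u => myE K D₁ D₂ u i) (hz (d ⊗ₜ[K] 1))
      simpa [myE_mul_left, myE_mul_right] using this
    have := Algebra.IsCentral.out (K := K) (D := D₁) hcen
    rw [Algebra.mem_bot] at this
    obtain ⟨c, hc⟩ := this
    exact ⟨c, hc.symm⟩
  choose c hc using hcoef
  set w : D₂ := (myE K D₁ D₂ z).sum (fun i _ => c i • b i) with hw
  have hzw : z = 1 ⊗ₜ[K] w := by
    conv_lhs => rw [← (myE K D₁ D₂).symm_apply_apply z,
      ← Finsupp.sum_single (myE K D₁ D₂ z), map_finsuppSum]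
    rw [hw, Finsupp.sum, Finsupp.sum, TensorProduct.tmul_sum]
    refine Finset.sum_congr rfl fun i hi => ?_
    rw [hc i, myE_symm_single, Algebra.algebraMap_eq_smul_one, TensorProduct.smul_tmul]
  have hwcen : w ∈ Subalgebra.center K D₂ := by
    rw [Subalgebra.mem_center_iff]
    intro d
    have h := hz (1 ⊗ₜ[K] d)
    rw [hzw, Algebra.TensorProduct.tmul_mul_tmul, Algebra.TensorProduct.tmul_mul_tmul] at h
    simp only [one_mul] at h
    have hinj : ∀ u v : D₂, (1 : D₁) ⊗ₜ[K] u = 1 ⊗ₜ[K] v → u = v := by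
      intro u v huv
      have h' : ∀ i, myE K D₁ D₂ (1 ⊗ₜ[K] u) i = myE K D₁ D₂ (1 ⊗ₜ[K] v) i :=
        fun i => by rw [huv]
      apply b.repr.injective
      ext i
      have := h' i
      rw [myE_tmul, myE_tmul] at this
      have : algebraMap K D₁ (b.repr u i) = algebraMap K D₁ (b.repr v i) := by
        simpa [Algebra.algebraMap_eq_smul_one] using this
      exact (algebraMap K D₁).injective this
    exact hinj _ _ h
  have := Algebra.IsCentral.out (K := K) (D := D₂) hwcen
  rw [Algebra.mem_bot] at this
  obtain ⟨k, hk⟩ := this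
  rw [Algebra.mem_bot]
  refine ⟨k, ?_⟩
  rw [hzw, ← hk, Algebra.algebraMap_eq_smul_one, Algebra.TensorProduct.one_def,
    Algebra.algebraMap_eq_smul_one, TensorProduct.tmul_smul]
end Center

/-- The tensor product of two finite-dimensional central division algebras over `K` of
coprime degrees `d₁`, `d₂` is a central division algebra over `K` of degree `d₁·d₂`. -/
theorem tensorProduct_divisionAlgebra_of_coprime_degrees
    (K D₁ D₂ : Type*) [Field K]
    [DivisionRing D₁] [Algebra K D₁] [FiniteDimensional K D₁] [Algebra.IsCentral K D₁]
    [DivisionRing D₂] [Algebra K D₂] [FiniteDimensional K D₂] [Algebra.IsCentral K D₂]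
    (d₁ d₂ : ℕ)
    (h₁ : Module.finrank K D₁ = d₁ ^ 2) (h₂ : Module.finrank K D₂ = d₂ ^ 2)
    (hcop : Nat.Coprime d₁ d₂) :
    (∀ x : D₁ ⊗[K] D₂, x ≠ 0 → IsUnit x) ∧
      Algebra.IsCentral K (D₁ ⊗[K] D₂) ∧
      Module.finrank K (D₁ ⊗[K] D₂) = (d₁ * d₂) ^ 2 := by
  have hA : finrank K (D₁ ⊗[K] D₂) = (d₁ * d₂) ^ 2 := by
    rw [Module.finrank_tensorProduct, h₁, h₂, mul_pow]
  have hleft : ∀ x : D₁ ⊗[K] D₂, x ≠ 0 → ∃ y, y * x = 1 := by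
    intro x hx
    set J : Submodule K (D₁ ⊗[K] D₂) := LinearMap.range (LinearMap.mulRight K x) with hJ
    have hd1 : finrank K D₁ ∣ finrank K J := aux_dvd K D₁ D₂ x
    have hd2 : finrank K D₂ ∣ finrank K J := by
      have h := aux_dvd K D₂ D₁ ((Algebra.TensorProduct.comm K D₁ D₂) x)
      have heq : (LinearMap.range
            (LinearMap.mulRight K ((Algebra.TensorProduct.comm K D₁ D₂) x))
            : Submodule K (D₂ ⊗[K] D₁))
          = J.map (Algebra.TensorProduct.comm K D₁ D₂).toLinearMap := by
        ext u
        constructor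
        · rintro ⟨a, rfl⟩
          exact ⟨(Algebra.TensorProduct.comm K D₁ D₂).symm a * x, ⟨_, rfl⟩, by simp⟩
        · rintro ⟨_, ⟨a, rfl⟩, rfl⟩
          exact ⟨(Algebra.TensorProduct.comm K D₁ D₂) a, by simp⟩
      rw [heq, show (Algebra.TensorProduct.comm K D₁ D₂).toLinearMap
          = ((Algebra.TensorProduct.comm K D₁ D₂).toLinearEquiv : D₁ ⊗[K] D₂ →ₗ[K] D₂ ⊗[K] D₁)
          from rfl,
        LinearEquiv.finrank_map_eq (Algebra.TensorProduct.comm K D₁ D₂).toLinearEquiv J] at h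
      exact h
    have hJne : finrank K J ≠ 0 := by
      have hxJ : x ∈ J := ⟨1, one_mul x⟩
      intro h
      have : J = ⊥ := Submodule.finrank_eq_zero.mp h
      exact hx (by simpa [this] using hxJ)
    have hdvd : d₁ ^ 2 * d₂ ^ 2 ∣ finrank K J := by
      have hcop2 : Nat.Coprime (d₁ ^ 2) (d₂ ^ 2) := Nat.Coprime.pow 2 2 hcop
      exact hcop2.mul_dvd_of_dvd_of_dvd (h₁ ▸ hd1) (h₂ ▸ hd2)
    have hle : finrank K J ≤ (d₁ * d₂) ^ 2 := hA ▸ Submodule.finrank_le J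
    have hfr : finrank K J = finrank K (D₁ ⊗[K] D₂) := by
      have h1 := Nat.le_of_dvd (Nat.pos_of_ne_zero hJne) hdvd
      have h2 : (d₁ * d₂) ^ 2 = d₁ ^ 2 * d₂ ^ 2 := mul_pow d₁ d₂ 2
      omega
    have hJtop : J = ⊤ := Submodule.eq_top_of_finrank_eq hfr
    have h1 : (1 : D₁ ⊗[K] D₂) ∈ J := hJtop ▸ Submodule.mem_top
    obtain ⟨y, hy⟩ := h1
    exact ⟨y, hy⟩
  refine ⟨?_, central_tensor K D₁ D₂, hA⟩
  intro x hx
  obtain ⟨y, hy⟩ := hleft x hx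
  have hy0 : y ≠ 0 := by rintro rfl; rw [zero_mul] at hy; exact one_ne_zero hy.symm
  obtain ⟨z, hz⟩ := hleft y hy0
  have hxy : x * y = 1 := by
    have hzx : z = x := by
      calc z = z * (y * x) := by rw [hy, mul_one]
      _ = (z * y) * x := by rw [mul_assoc]
      _ = x := by rw [hz, one_mul]
    rw [← hzx, hz]
  exact ⟨⟨x, y, hxy, hy⟩, rfl⟩
end
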